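/- arXiv:1902.03694 — 3 statements merged into one kernel-verified Lean document; each statement's English description precedes it below -/
import Mathlib

section
/- Let 0 < μ ≤ L, let f be μ-strongly convex with L-Lipschitz gradient on ℝⁿ, with minimizer x⋆, and take step size s = μ/(100L²). Then the iterates of the explicit Euler scheme for the high-resolution NAG-SC ODE satisfy, for every k ≥ 0, f(x_k) − f(x⋆) ≤ 3L‖x₀ − x⋆‖² (1 − μ/(80L))^k. -/
set_option maxHeartbeats 4000000

open scoped RealInnerProductSpace

section Helpers

variable {n : ℕ}
local notation "EE" => EuclideanSpace ℝ (Fin n)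

lemma nexp3 (α β γ : ℝ) (u v w : EE) :
    ‖α•u + β•v + γ•w‖^2 = α^2*‖u‖^2 + β^2*‖v‖^2 + γ^2*‖w‖^2
      + 2*(α*β)*⟪u,v⟫ + 2*(α*γ)*⟪u,w⟫ + 2*(β*γ)*⟪v,w⟫ := by
  simp only [← real_inner_self_eq_norm_sq, inner_add_add_self, inner_add_left, inner_add_right,
    real_inner_smul_left, real_inner_smul_right, real_inner_comm u v, real_inner_comm u w,
    real_inner_comm v w]
  ring

lemma nexp2 (β : ℝ) (u z : EE) :
    ‖u + β•z‖^2 = ‖u‖^2 + β^2*‖z‖^2 + 2*β*⟪u,z⟫ := by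
  simp only [← real_inner_self_eq_norm_sq, inner_add_add_self, inner_add_left, inner_add_right,
    real_inner_smul_left, real_inner_smul_right, real_inner_comm u z]
  ring

lemma descent (L : ℝ) (hL : 0 ≤ L) (f : EE → ℝ) (f' : EE → EE)
    (hgrad : ∀ z, HasGradientAt f (f' z) z)
    (hLip : ∀ z w, ‖f' z - f' w‖ ≤ L * ‖z - w‖) (x y : EE) :
    f y ≤ f x + ⟪f' x, y - x⟫ + L * ‖y - x‖ ^ 2 := by
  have key : ‖f y - f x - (InnerProductSpace.toDual ℝ EE (f' x)) (y - x)‖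
      ≤ (L * ‖y - x‖) * ‖y - x‖ := by
    apply Convex.norm_image_sub_le_of_norm_hasFDerivWithin_le'
      (f' := fun z => InnerProductSpace.toDual ℝ EE (f' z)) (s := segment ℝ x y)
    · intro z hz
      exact (hgrad z).hasFDerivAt.hasFDerivWithinAt
    · intro z hz
      rw [← map_sub, LinearIsometryEquiv.norm_map]
      calc ‖f' z - f' x‖ ≤ L * ‖z - x‖ := hLip z x
        _ ≤ L * ‖y - x‖ := by
            apply mul_le_mul_of_nonneg_left _ hL
            rw [segment_eq_image'] at hz
            obtain ⟨t, ht, rfl⟩ := hz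
            simp only [add_sub_cancel_left, norm_smul, Real.norm_eq_abs,
              abs_of_nonneg ht.1]
            nlinarith [norm_nonneg (y - x), ht.2]
    · exact convex_segment x y
    · exact left_mem_segment ℝ x y
    · exact right_mem_segment ℝ x y
  have h2 : (InnerProductSpace.toDual ℝ EE (f' x)) (y - x) = ⟪f' x, y - x⟫ := rfl
  rw [h2] at key
  have := abs_le.1 (by rwa [Real.norm_eq_abs] at key) |>.2
  nlinarith [sq_nonneg ‖y - x‖]

lemma key_scalar (L m a P Q R W DD F F' b1 b2 c3 c4 : ℝ)
    (hL : 0 < L) (hm : 0 < m) (hm' : m ≤ 1/10) (ha2 : a^2 = m/(10*L))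
    (hP : 0 ≤ P) (hQ : 0 ≤ Q) (hR : 0 ≤ R) (hDD : 0 ≤ DD) (hF : 0 ≤ F)
    (h1 : F' ≤ F + b1 + (m/10)*P)
    (h2 : F + 5*m*L*R ≤ c4)
    (h3 : 0 ≤ b2)
    (h4 : 10*DD ≤ m*L*P)
    (h5 : Q ≤ 4*L*F)
    (h6 : 2*c3 ≤ DD + Q)
    (h7 : 20*L*m*b1 ≤ 10*L*m^2*P + m*Q)
    (h8 : 10*L*W ≤ 30*L*P + 1200*m*L^2*R + 3*m*Q) :
    F' + (1/4)*((1-2*m)^2*P + a^2*DD + a^2*(1+m)^2*Q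
        - 2*(1-2*m)*b2 - 2*(1-2*m)*(1+m)*b1 + 2*a^2*(1+m)*c3)
      + (1/4)*(W - 2*(1+m)*b1 - 4*m*(1+m)*c4
        - 2*a^2*(1+m)*Q + a^2*(1+m)^2*Q)
    ≤ (1 - m/8)*(F + (1/4)*P + (1/4)*W) := by
  rw [ha2, ← sub_nonneg]
  have hL' : L ≠ 0 := hL.ne'
  have key : (1 - m/8)*(F + (1/4)*P + (1/4)*W)
      - (F' + (1/4)*((1-2*m)^2*P + (m/(10*L))*DD + (m/(10*L))*(1+m)^2*Q
        - 2*(1-2*m)*b2 - 2*(1-2*m)*(1+m)*b1 + 2*(m/(10*L))*(1+m)*c3)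
      + (1/4)*(W - 2*(1+m)*b1 - 4*m*(1+m)*c4
        - 2*(m/(10*L))*(1+m)*Q + (m/(10*L))*(1+m)^2*Q))
      = ((1 - m/8)*(160*L*F + 40*L*P + 40*L*W)
      - (160*L*F' + 40*L*((1-2*m)^2*P - 2*(1-2*m)*b2 - 2*(1-2*m)*(1+m)*b1)
        + 4*m*DD + 4*m*(1+m)^2*Q + 8*m*(1+m)*c3
        + 40*L*(W - 2*(1+m)*b1 - 4*m*(1+m)*c4)
        - 8*m*(1+m)*Q + 4*m*(1+m)^2*Q)) / (160*L) := by
    field_simp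
    ring
  rw [key]
  apply div_nonneg _ (by linarith)
  nlinarith [mul_le_mul_of_nonneg_left h2 (show (0:ℝ) ≤ 160*L*m*(1+m) by positivity),
    mul_le_mul_of_nonneg_left h4 (show (0:ℝ) ≤ m*(2+m)/10 by nlinarith),
    mul_le_mul_of_nonneg_left h5 (show (0:ℝ) ≤ 35*m/10 by nlinarith),
    mul_le_mul_of_nonneg_left h6 (show (0:ℝ) ≤ 4*m*(1+m) by nlinarith),
    mul_le_mul_of_nonneg_left h7 (show (0:ℝ) ≤ 8*m by nlinarith),
    mul_le_mul_of_nonneg_left h1 (show (0:ℝ) ≤ 160*L by positivity),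
    mul_le_mul_of_nonneg_left h8 (show (0:ℝ) ≤ m/8 by nlinarith),
    mul_nonneg (show (0:ℝ) ≤ 40*L*(1-2*m) by nlinarith) h3,
    mul_nonneg (mul_nonneg hm.le hP) hL.le,
    mul_nonneg (mul_nonneg (mul_nonneg hm.le hm.le) hP) hL.le,
    mul_nonneg (mul_nonneg (mul_nonneg (mul_nonneg hm.le hm.le) hm.le) hP) hL.le,
    mul_nonneg hm.le hQ,
    mul_nonneg (mul_nonneg hm.le hm.le) hQ,
    mul_nonneg (mul_nonneg (mul_nonneg hm.le hm.le) hR) (mul_nonneg hL.le hL.le),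
    mul_nonneg hF hL.le, sq_nonneg m,
    mul_nonneg (mul_nonneg hm.le hF) hL.le]

end Helpers

theorem stmt1
    {n : ℕ} (μ L : ℝ) (hμ : 0 < μ) (hμL : μ ≤ L)
    (f : EuclideanSpace ℝ (Fin n) → ℝ)
    (f' : EuclideanSpace ℝ (Fin n) → EuclideanSpace ℝ (Fin n))
    (hgrad : ∀ z, HasGradientAt f (f' z) z)
    (hLip : ∀ z w, ‖f' z - f' w‖ ≤ L * ‖z - w‖)
    (hsc : ∀ z w, f w ≥ f z + ⟪f' z, w - z⟫ + μ / 2 * ‖w - z‖ ^ 2)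
    (xstar : EuclideanSpace ℝ (Fin n)) (hmin : ∀ z, f xstar ≤ f z)
    (s : ℝ) (hs : s = μ / (100 * L ^ 2))
    (x v : ℕ → EuclideanSpace ℝ (Fin n))
    (hv0 : v 0 = -((2 * Real.sqrt s / (1 + Real.sqrt (μ * s))) • f' (x 0)))
    (hx : ∀ k : ℕ, x (k + 1) - x k = Real.sqrt s • v k)
    (hv : ∀ k : ℕ, v (k + 1) - v k = -((2 * Real.sqrt (μ * s)) • v k)
      - Real.sqrt s • (f' (x (k + 1)) - f' (x k))
      - (Real.sqrt s * (1 + Real.sqrt (μ * s))) • f' (x k))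
    : ∀ k : ℕ, f (x k) - f xstar ≤ 3 * L * ‖x 0 - xstar‖ ^ 2 * (1 - μ / (80 * L)) ^ k := by
  have hL : 0 < L := lt_of_lt_of_le hμ hμL
  have hLne : L ≠ 0 := hL.ne'
  set a := Real.sqrt s with ha_def
  set m := Real.sqrt (μ * s) with hm_def
  have hspos : 0 < s := by rw [hs]; positivity
  have ha : 0 < a := Real.sqrt_pos.2 hspos
  have ha2s : a^2 = s := Real.sq_sqrt hspos.le
  have hmval : m = μ/(10*L) := by
    rw [hm_def, hs, show μ * (μ / (100 * L ^ 2)) = (μ / (10 * L)) ^ 2 by field_simp; ring]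
    exact Real.sqrt_sq (le_of_lt (div_pos hμ (by linarith)))
  have hm : 0 < m := by rw [hmval]; exact div_pos hμ (by linarith)
  have hm' : m ≤ 1/10 := by
    rw [hmval, div_le_div_iff₀ (by linarith) (by norm_num)]
    linarith only [hμL]
  have hsa : Real.sqrt μ * a = m := by rw [hm_def, ha_def, ← Real.sqrt_mul hμ.le]
  have ha2 : a^2 = m/(10*L) := by
    rw [ha2s, hs, hmval, div_div]
    congr 1
    ring
  have hLa : L * a^2 = m/10 := by rw [ha2]; field_simp
  have hmu10 : μ = 10*m*L := by rw [hmval]; field_simp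
  -- f(z) - f* dominates ‖∇f(z)‖²/(4L)
  have hlow : ∀ z, ‖f' z‖^2 ≤ 4*L*(f z - f xstar) := by
    intro z
    have hd := descent L hL.le f f' hgrad hLip z (z - (1/(2*L)) • f' z)
    have h0 := hmin (z - (1/(2*L)) • f' z)
    rw [show z - (1/(2*L)) • f' z - z = -((1/(2*L)) • f' z) by abel,
      inner_neg_right, real_inner_smul_right, real_inner_self_eq_norm_sq,
      norm_neg, norm_smul, Real.norm_eq_abs,
      abs_of_nonneg (by positivity : (0:ℝ) ≤ 1/(2*L)), mul_pow] at hd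
    have h2 : L * ((1/(2*L))^2 * ‖f' z‖^2) = (1/(4*L)) * ‖f' z‖^2 := by
      field_simp; ring
    have h3 : (1/(2*L)) * ‖f' z‖^2 = 2*((1/(4*L)) * ‖f' z‖^2) := by
      field_simp; ring
    have key : (1/(4*L)) * ‖f' z‖^2 ≤ f z - f xstar := by
      rw [h2] at hd; rw [h3] at hd; linarith only [hd, h0]
    calc ‖f' z‖^2 = 4*L*((1/(4*L))*‖f' z‖^2) := by field_simp
      _ ≤ 4*L*(f z - f xstar) := by
          apply mul_le_mul_of_nonneg_left key (by positivity)
  have hstar : f' xstar = 0 := by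
    have h := hlow xstar
    rw [sub_self, mul_zero] at h
    exact norm_eq_zero.1 (by nlinarith only [h, norm_nonneg (f' xstar), sq_nonneg ‖f' xstar‖])
  set w : ℕ → EuclideanSpace ℝ (Fin n) :=
    fun k => v k + (2*Real.sqrt μ) • (x k - xstar) + a • f' (x k) with hw_def
  have hxe : ∀ k, x (k+1) = x k + a • v k := by
    intro k
    have h := hx k
    rw [sub_eq_iff_eq_add] at h
    rw [h]; abel
  have hve : ∀ k, v (k+1) = (1-2*m) • v k + (-a) • (f' (x (k+1)) - f' (x k))
      + (-(a*(1+m))) • f' (x k) := by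
    intro k
    have h := hv k
    rw [sub_eq_iff_eq_add] at h
    rw [h]; module
  have hwe : ∀ k, w (k+1) = w k + (-(a*(1+m))) • f' (x k) := by
    intro k
    simp only [hw_def]
    rw [hve k, hxe k, ← hsa]
    module
  -- one-step Lyapunov decrease
  have hE : ∀ k, (f (x (k+1)) - f xstar) + (1/4)*‖v (k+1)‖^2 + (1/4)*‖w (k+1)‖^2
      ≤ (1-m/8)*((f (x k) - f xstar) + (1/4)*‖v k‖^2 + (1/4)*‖w k‖^2) := by
    intro k
    have env : ‖v (k+1)‖^2 = (1-2*m)^2*‖v k‖^2 + a^2*‖f' (x (k+1)) - f' (x k)‖^2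
        + a^2*(1+m)^2*‖f' (x k)‖^2
        - 2*(1-2*m)*(a*⟪v k, f' (x (k+1)) - f' (x k)⟫)
        - 2*(1-2*m)*(1+m)*(a*⟪v k, f' (x k)⟫)
        + 2*a^2*(1+m)*⟪f' (x (k+1)) - f' (x k), f' (x k)⟫ := by
      rw [hve k, nexp3]; ring
    have winner : ⟪w k, f' (x k)⟫ = ⟪v k, f' (x k)⟫
        + 2*Real.sqrt μ*⟪x k - xstar, f' (x k)⟫ + a*‖f' (x k)‖^2 := by
      simp only [hw_def]
      rw [inner_add_left, inner_add_left, real_inner_smul_left, real_inner_smul_left,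
        real_inner_self_eq_norm_sq]
    have enw : ‖w (k+1)‖^2 = ‖w k‖^2 - 2*(1+m)*(a*⟪v k, f' (x k)⟫)
        - 4*m*(1+m)*⟪x k - xstar, f' (x k)⟫
        - 2*a^2*(1+m)*‖f' (x k)‖^2 + a^2*(1+m)^2*‖f' (x k)‖^2 := by
      rw [hwe k, nexp2, winner, ← hsa]; ring
    have hh1 : f (x (k+1)) - f xstar ≤ (f (x k) - f xstar)
        + a*⟪v k, f' (x k)⟫ + (m/10)*‖v k‖^2 := by
      have hd := descent L hL.le f f' hgrad hLip (x k) (x (k+1))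
      rw [hx k, real_inner_smul_right, norm_smul, Real.norm_eq_abs, abs_of_nonneg ha.le,
        mul_pow, real_inner_comm (v k) (f' (x k))] at hd
      have he : L * (a^2 * ‖v k‖^2) = (m/10)*‖v k‖^2 := by rw [← mul_assoc, hLa]
      linarith only [hd, he.le, he.ge]
    have hh2 : (f (x k) - f xstar) + 5*m*L*‖x k - xstar‖^2 ≤ ⟪x k - xstar, f' (x k)⟫ := by
      have h := hsc (x k) xstar
      rw [show xstar - x k = -(x k - xstar) by abel, inner_neg_right, norm_neg,
        real_inner_comm (x k - xstar) (f' (x k))] at h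
      have he : μ/2 = 5*m*L := by rw [hmu10]; ring
      rw [he] at h
      linarith only [h]
    have hh3 : 0 ≤ a*⟪v k, f' (x (k+1)) - f' (x k)⟫ := by
      have e1 := hsc (x k) (x (k+1))
      have e2 := hsc (x (k+1)) (x k)
      rw [show x k - x (k+1) = -(x (k+1) - x k) by abel, inner_neg_right, norm_neg] at e2
      have hdd : 0 ≤ ⟪f' (x (k+1)) - f' (x k), x (k+1) - x k⟫ := by
        rw [inner_sub_left]
        nlinarith only [e1, e2, mul_nonneg hμ.le (sq_nonneg ‖x (k+1) - x k‖)]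
      rw [hx k, real_inner_smul_right] at hdd
      rwa [real_inner_comm (v k) (f' (x (k+1)) - f' (x k))] at hdd
      
    have hh4 : 10*‖f' (x (k+1)) - f' (x k)‖^2 ≤ m*L*‖v k‖^2 := by
      have hl := hLip (x (k+1)) (x k)
      rw [hx k, norm_smul, Real.norm_eq_abs, abs_of_nonneg ha.le] at hl
      have h2 : ‖f' (x (k+1)) - f' (x k)‖^2 ≤ (L*(a*‖v k‖))^2 :=
        pow_le_pow_left₀ (norm_nonneg _) hl 2
      have h3 : (L*(a*‖v k‖))^2 = L*(m/10)*‖v k‖^2 := by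
        rw [mul_pow, mul_pow, ← hLa]; ring
      rw [h3] at h2
      nlinarith only [h2, mul_nonneg (mul_nonneg hm.le hL.le) (sq_nonneg ‖v k‖)]
    have hh5 : ‖f' (x k)‖^2 ≤ 4*L*(f (x k) - f xstar) := hlow (x k)
    have hh6 : 2*⟪f' (x (k+1)) - f' (x k), f' (x k)⟫
        ≤ ‖f' (x (k+1)) - f' (x k)‖^2 + ‖f' (x k)‖^2 := by
      nlinarith only [real_inner_le_norm (f' (x (k+1)) - f' (x k)) (f' (x k)),
        sq_nonneg (‖f' (x (k+1)) - f' (x k)‖ - ‖f' (x k)‖)]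
    have hh7 : 20*L*m*(a*⟪v k, f' (x k)⟫) ≤ 10*L*m^2*‖v k‖^2 + m*‖f' (x k)‖^2 := by
      have h0 : (0:ℝ) ≤ ‖m • v k - a • f' (x k)‖^2 := sq_nonneg _
      rw [norm_sub_sq_real, real_inner_smul_left, real_inner_smul_right, norm_smul, norm_smul,
        Real.norm_eq_abs, Real.norm_eq_abs, abs_of_nonneg hm.le, abs_of_nonneg ha.le,
        mul_pow, mul_pow] at h0
      have h1 : 10*L*(m^2*‖v k‖^2 - 2*(m*(a*⟪v k, f' (x k)⟫)) + a^2*‖f' (x k)‖^2)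
          = 10*L*m^2*‖v k‖^2 - 20*L*m*(a*⟪v k, f' (x k)⟫) + m*‖f' (x k)‖^2 := by
        rw [ha2]; field_simp; ring
      linarith only [mul_nonneg (by positivity : (0:ℝ) ≤ 10*L) h0, h1.le, h1.ge]
    have hh8 : 10*L*‖w k‖^2 ≤ 30*L*‖v k‖^2 + 1200*m*L^2*‖x k - xstar‖^2
        + 3*m*‖f' (x k)‖^2 := by
      have t1 : ‖w k‖ ≤ ‖v k‖ + 2*Real.sqrt μ*‖x k - xstar‖ + a*‖f' (x k)‖ := by
        simp only [hw_def]
        refine le_trans (norm_add_le _ _) ?_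
        have t0 := norm_add_le (v k) ((2*Real.sqrt μ) • (x k - xstar))
        rw [norm_smul, Real.norm_eq_abs,
          abs_of_nonneg (by positivity : (0:ℝ) ≤ 2*Real.sqrt μ)] at t0
        rw [norm_smul, Real.norm_eq_abs, abs_of_nonneg ha.le]
        linarith only [t0, norm_add_le (v k + (2*Real.sqrt μ) • (x k - xstar)) (a • f' (x k))]
      have t2 : ‖w k‖^2 ≤ 3*‖v k‖^2 + 12*(Real.sqrt μ)^2*‖x k - xstar‖^2
          + 3*a^2*‖f' (x k)‖^2 := by
        nlinarith only [t1, norm_nonneg (w k), norm_nonneg (v k),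
          mul_nonneg (Real.sqrt_nonneg μ) (norm_nonneg (x k - xstar)),
          mul_nonneg ha.le (norm_nonneg (f' (x k))),
          sq_nonneg (‖v k‖ - 2*Real.sqrt μ*‖x k - xstar‖),
          sq_nonneg (‖v k‖ - a*‖f' (x k)‖),
          sq_nonneg (2*Real.sqrt μ*‖x k - xstar‖ - a*‖f' (x k)‖)]
      have t3 : 10*L*(3*‖v k‖^2 + 12*(Real.sqrt μ)^2*‖x k - xstar‖^2 + 3*a^2*‖f' (x k)‖^2)
          = 30*L*‖v k‖^2 + 1200*m*L^2*‖x k - xstar‖^2 + 3*m*‖f' (x k)‖^2 := by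
        rw [Real.sq_sqrt hμ.le, hmu10, ha2]; field_simp; ring
      linarith only [mul_le_mul_of_nonneg_left t2 (by positivity : (0:ℝ) ≤ 10*L), t3.le, t3.ge]
    have main := key_scalar L m a (‖v k‖^2) (‖f' (x k)‖^2) (‖x k - xstar‖^2) (‖w k‖^2)
        (‖f' (x (k+1)) - f' (x k)‖^2) (f (x k) - f xstar) (f (x (k+1)) - f xstar)
        (a*⟪v k, f' (x k)⟫) (a*⟪v k, f' (x (k+1)) - f' (x k)⟫)
        (⟪f' (x (k+1)) - f' (x k), f' (x k)⟫) (⟪x k - xstar, f' (x k)⟫)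
        hL hm hm' ha2 (sq_nonneg _) (sq_nonneg _) (sq_nonneg _) (sq_nonneg _)
        (by linarith only [hmin (x k)]) hh1 hh2 hh3 hh4 hh5 hh6 hh7 hh8
    rw [env, enw]
    linarith only [main]
  -- initial bound
  have hF0 : f (x 0) - f xstar ≤ L*‖x 0 - xstar‖^2 := by
    have hd := descent L hL.le f f' hgrad hLip xstar (x 0)
    rw [hstar, inner_zero_left] at hd
    linarith only [hd]
  have hG0 : ‖f' (x 0)‖ ≤ L*‖x 0 - xstar‖ := by
    have h := hLip (x 0) xstar
    rwa [hstar, sub_zero] at h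
  have haL : a*L = Real.sqrt μ/10 := by
    have h1 : (a*L)^2 = (Real.sqrt μ/10)^2 := by
      rw [mul_pow, ha2s, hs, div_pow, Real.sq_sqrt hμ.le]
      field_simp
      ring
    have h2 : 0 ≤ a*L := by positivity
    have h3 : 0 ≤ Real.sqrt μ/10 := by positivity
    calc a*L = Real.sqrt ((a*L)^2) := (Real.sqrt_sq h2).symm
      _ = Real.sqrt ((Real.sqrt μ/10)^2) := by rw [h1]
      _ = Real.sqrt μ/10 := Real.sqrt_sq h3
  have hv0n : ‖v 0‖ ≤ (1/5)*Real.sqrt μ*‖x 0 - xstar‖ := by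
    have h1m : (0:ℝ) < 1 + m := by linarith
    rw [hv0, norm_neg, norm_smul, Real.norm_eq_abs,
      abs_of_nonneg (le_of_lt (div_pos (by linarith) h1m))]
    have hc : 2*a/(1+m) ≤ 2*a := by
      rw [div_le_iff₀ h1m]; nlinarith only [mul_nonneg ha.le hm.le]
    calc 2*a/(1+m) * ‖f' (x 0)‖ ≤ 2*a*‖f' (x 0)‖ :=
          mul_le_mul_of_nonneg_right hc (norm_nonneg _)
      _ ≤ 2*a*(L*‖x 0 - xstar‖) := by
          apply mul_le_mul_of_nonneg_left hG0 (by positivity)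
      _ = (1/5)*Real.sqrt μ*‖x 0 - xstar‖ := by
          rw [show 2*a*(L*‖x 0 - xstar‖) = 2*(a*L)*‖x 0 - xstar‖ by ring, haL]; ring
  have hw0n : ‖w 0‖ ≤ (23/10)*Real.sqrt μ*‖x 0 - xstar‖ := by
    have t1 : ‖w 0‖ ≤ ‖v 0‖ + 2*Real.sqrt μ*‖x 0 - xstar‖ + a*‖f' (x 0)‖ := by
      simp only [hw_def]
      refine le_trans (norm_add_le _ _) ?_
      have t0 := norm_add_le (v 0) ((2*Real.sqrt μ) • (x 0 - xstar))
      rw [norm_smul, Real.norm_eq_abs,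
        abs_of_nonneg (by positivity : (0:ℝ) ≤ 2*Real.sqrt μ)] at t0
      rw [norm_smul, Real.norm_eq_abs, abs_of_nonneg ha.le]
      linarith only [t0, norm_add_le (v 0 + (2*Real.sqrt μ) • (x 0 - xstar)) (a • f' (x 0))]
    have t2 : a*‖f' (x 0)‖ ≤ (1/10)*Real.sqrt μ*‖x 0 - xstar‖ := by
      calc a*‖f' (x 0)‖ ≤ a*(L*‖x 0 - xstar‖) :=
            mul_le_mul_of_nonneg_left hG0 ha.le
        _ = (1/10)*Real.sqrt μ*‖x 0 - xstar‖ := by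
            rw [show a*(L*‖x 0 - xstar‖) = (a*L)*‖x 0 - xstar‖ by ring, haL]; ring
    linarith only [t1, t2, hv0n]
  have hE0 : (f (x 0) - f xstar) + (1/4)*‖v 0‖^2 + (1/4)*‖w 0‖^2
      ≤ 3*L*‖x 0 - xstar‖^2 := by
    have s1 : ‖v 0‖^2 ≤ ((1/5)*Real.sqrt μ*‖x 0 - xstar‖)^2 :=
      pow_le_pow_left₀ (norm_nonneg _) hv0n 2
    have s2 : ‖w 0‖^2 ≤ ((23/10)*Real.sqrt μ*‖x 0 - xstar‖)^2 :=
      pow_le_pow_left₀ (norm_nonneg _) hw0n 2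
    have e1 : ((1/5)*Real.sqrt μ*‖x 0 - xstar‖)^2 = (1/25)*μ*‖x 0 - xstar‖^2 := by
      rw [mul_pow, mul_pow, Real.sq_sqrt hμ.le]; ring
    have e2 : ((23/10)*Real.sqrt μ*‖x 0 - xstar‖)^2 = (529/100)*μ*‖x 0 - xstar‖^2 := by
      rw [mul_pow, mul_pow, Real.sq_sqrt hμ.le]; ring
    rw [e1] at s1; rw [e2] at s2
    nlinarith only [s1, s2, hF0, mul_le_mul_of_nonneg_right hμL (sq_nonneg ‖x 0 - xstar‖),
      sq_nonneg ‖x 0 - xstar‖, hμ.le]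
  have hρ : (0:ℝ) ≤ 1 - m/8 := by linarith only [hm']
  have hEk : ∀ k, (f (x k) - f xstar) + (1/4)*‖v k‖^2 + (1/4)*‖w k‖^2
      ≤ 3*L*‖x 0 - xstar‖^2*(1-m/8)^k := by
    intro k
    induction k with
    | zero => simpa using hE0
    | succ k ih =>
      calc (f (x (k+1)) - f xstar) + (1/4)*‖v (k+1)‖^2 + (1/4)*‖w (k+1)‖^2
          ≤ (1-m/8)*((f (x k) - f xstar) + (1/4)*‖v k‖^2 + (1/4)*‖w k‖^2) := hE k
        _ ≤ (1-m/8)*(3*L*‖x 0 - xstar‖^2*(1-m/8)^k) := mul_le_mul_of_nonneg_left ih hρ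
        _ = 3*L*‖x 0 - xstar‖^2*(1-m/8)^(k+1) := by ring
  intro k
  have h := hEk k
  have hrw : 1 - μ/(80*L) = 1 - m/8 := by
    rw [hmval]; field_simp; ring
  rw [hrw]
  linarith only [h, sq_nonneg ‖v k‖, sq_nonneg ‖w k‖]
end

section
/- Let 0 < μ ≤ L, let f be μ-strongly convex with L-Lipschitz gradient on ℝⁿ, with minimizer x⋆, and take step size s = μ/(16L²). Then the iterates of the symplectic Euler scheme for the high-resolution heavy-ball ODE satisfy, for every k ≥ 0, f(x_k) − f(x⋆) ≤ 3L‖x₀ − x⋆‖² / (1 + μ/(16L))^k. -/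
open scoped RealInnerProductSpace

variable {E : Type*} [NormedAddCommGroup E] [InnerProductSpace ℝ E] [CompleteSpace E]

lemma descent_lemma (L : ℝ) (hL : 0 ≤ L) (f : E → ℝ) (f' : E → E)
    (hgrad : ∀ z, HasGradientAt f (f' z) z)
    (hLip : ∀ z w, ‖f' z - f' w‖ ≤ L * ‖z - w‖) (z w : E) :
    f w ≤ f z + ⟪f' z, w - z⟫ + L * ‖w - z‖ ^ 2 := by
  have bound : ∀ u ∈ segment ℝ z w,
      ‖(InnerProductSpace.toDual ℝ E) (f' u) - (InnerProductSpace.toDual ℝ E) (f' z)‖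
        ≤ L * ‖w - z‖ := by
    intro u hu
    rw [← map_sub, (InnerProductSpace.toDual ℝ E).norm_map]
    refine (hLip u z).trans ?_
    obtain ⟨α, β, hα, hβ, hαβ, rfl⟩ := hu
    have h1 : α • z + β • w - z = β • (w - z) := by
      have : α = 1 - β := by linarith
      rw [this]; module
    rw [h1, norm_smul, Real.norm_eq_abs, abs_of_nonneg hβ]
    have hβ1 : β ≤ 1 := by linarith
    have h2 : β * ‖w - z‖ ≤ ‖w - z‖ := by nlinarith [norm_nonneg (w - z)]
    exact mul_le_mul_of_nonneg_left h2 hL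
  have key := Convex.norm_image_sub_le_of_norm_hasFDerivWithin_le'
    (f := f) (f' := fun u => (InnerProductSpace.toDual ℝ E) (f' u))
    (φ := (InnerProductSpace.toDual ℝ E) (f' z)) (C := L * ‖w - z‖)
    (fun u _ => ((hgrad u).hasFDerivAt).hasFDerivWithinAt) bound
    (convex_segment z w) (left_mem_segment ℝ z w) (right_mem_segment ℝ z w)
  rw [InnerProductSpace.toDual_apply_apply] at key
  have h6 := abs_le.1 (by rwa [Real.norm_eq_abs] at key) |>.2
  have hsq : L * ‖w - z‖ * ‖w - z‖ = L * ‖w - z‖ ^ 2 := by ring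
  linarith [h6]

lemma pl_lemma (L : ℝ) (hL : 0 < L) (f : E → ℝ) (f' : E → E)
    (hgrad : ∀ z, HasGradientAt f (f' z) z)
    (hLip : ∀ z w, ‖f' z - f' w‖ ≤ L * ‖z - w‖)
    (xstar : E) (hmin : ∀ z, f xstar ≤ f z) (z : E) :
    ‖f' z‖ ^ 2 ≤ 4 * L * (f z - f xstar) := by
  have key := descent_lemma L hL.le f f' hgrad hLip z (z - (1/(2*L)) • f' z)
  have h1 : z - (1/(2*L)) • f' z - z = -((1/(2*L)) • f' z) := by abel
  rw [h1] at key
  have h2 : ⟪f' z, -((1/(2*L)) • f' z)⟫ = -(1/(2*L)) * ‖f' z‖^2 := by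
    rw [inner_neg_right, real_inner_smul_right, real_inner_self_eq_norm_sq]; ring
  have h3 : ‖-((1/(2*L)) • f' z)‖^2 = (1/(2*L))^2 * ‖f' z‖^2 := by
    rw [norm_neg, norm_smul, Real.norm_eq_abs, mul_pow, sq_abs]
  rw [h2, h3] at key
  have h4 := hmin (z - (1/(2*L)) • f' z)
  have hL' : (0:ℝ) < 2*L := by linarith
  have e : L * ((1/(2*L))^2 * ‖f' z‖^2) = (1/(4*L)) * ‖f' z‖^2 := by
    field_simp; ring
  rw [e] at key
  have e2 : -(1/(2*L)) * ‖f' z‖^2 + (1/(4*L)) * ‖f' z‖^2 = -((1/(4*L)) * ‖f' z‖^2) := by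
    field_simp; ring
  have : f xstar ≤ f z - (1/(4*L)) * ‖f' z‖^2 := by linarith
  have h5 : (1/(4*L)) * ‖f' z‖^2 ≤ f z - f xstar := by linarith
  calc ‖f' z‖^2 = 4*L * ((1/(4*L)) * ‖f' z‖^2) := by field_simp
  _ ≤ 4*L*(f z - f xstar) := by nlinarith


lemma cs_upper (p A B c d : ℝ) (h : p^2 ≤ A*B) (hA : 0 ≤ A) (hB : 0 ≤ B) :
    2*(c*d)*p ≤ c^2*A + d^2*B := by
  nlinarith [sq_nonneg (c^2*A - d^2*B),
    mul_nonneg (sq_nonneg (c*d)) (sub_nonneg.mpr h),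
    add_nonneg (mul_nonneg (sq_nonneg c) hA) (mul_nonneg (sq_nonneg d) hB)]

set_option maxHeartbeats 2000000 in
lemma step_scalar (L q r a F F0 nv nvp ng nxp nw nwp pgv pgx pvx E E' : ℝ)
    (hL : 0 < L) (ha : 0 < a)
    (hqe : q = 4*a*L) (hre : r = 4*a^2*L) (hr4 : r ≤ 1/4)
    (hF : 0 ≤ F) (hng : 0 ≤ ng) (hnxp : 0 ≤ nxp) (hnvp : 0 ≤ nvp) (hnv0 : 0 ≤ nv)
    (hnv : nv = (1+2*r)^2*nvp + 2*((1+2*r)*(a*(1+r)))*pgv + (a*(1+r))^2*ng)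
    (hnwp : nwp = (1+2*r)^2*nvp + 2*((1+2*r)*(2*q))*pvx + (2*q)^2*nxp)
    (hnw : nw = nwp + 2*(a*(1+r))*((1+2*r)*pgv + 2*q*pgx) + (a*(1+r))^2*ng)
    (hE : E = (1+r)*F0 + nv/4 + nw/4)
    (hE' : E' = (1+r)*F + nvp/4 + nwp/4)
    (hi : F0 ≥ F - a*((1+2*r)*pgv + a*(1+r)*ng) + r^2/2*nv)
    (hii : pgx ≥ F + q^2/2*nxp)
    (hiii : ng ≤ 4*L*F)
    (hcs : pvx^2 ≤ nvp*nxp) :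
    (1+r/4)*E' ≤ E := by
  have hr0 : 0 < r := by rw [hre]; positivity
  have hr1 : (0:ℝ) < 1 + r := by linarith
  have T1 : 0 ≤ (1+r) * (F0 - F + a*((1+2*r)*pgv + a*(1+r)*ng) - r^2/2*nv) :=
    mul_nonneg hr1.le (by linarith)
  have T2 : 0 ≤ (r*(1+r)) * (pgx - F - q^2/2*nxp) :=
    mul_nonneg (by positivity) (by linarith)
  have T3 : 0 ≤ ((a*(1+r))^2/2) * (4*L*F - ng) :=
    mul_nonneg (by positivity) (by linarith)
  have hS4 : 2*((1+2*r)*(2*q))*pvx ≤ (1+2*r)^2*nvp + (2*q)^2*nxp :=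
    cs_upper pvx nvp nxp (1+2*r) (2*q) hcs hnvp hnxp
  have T4 : 0 ≤ (r/16) * ((1+2*r)^2*nvp + (2*q)^2*nxp - 2*((1+2*r)*(2*q))*pvx) :=
    mul_nonneg (by positivity) (by linarith)
  have T5 : 0 ≤ (1+r)*(r^2/2)*nv := by positivity
  have T6 : 0 ≤ (r*(1+r)*(1-2*r)/4)*F := by
    have h6 : (0:ℝ) ≤ 1-2*r := by linarith
    positivity
  have T7 : 0 ≤ (r + r^2 - r/16 - (r/8)*(1+2*r)^2)*nvp := by
    have h7 : (0:ℝ) ≤ r + r^2 - r/16 - (r/8)*(1+2*r)^2 := by nlinarith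
    exact mul_nonneg h7 hnvp
  have T8 : 0 ≤ (r^2*q^2/2)*nxp := by positivity
  subst hE hE' hnw hnwp hnv hre hqe
  linarith [T1, T2, T3, T4, T5, T6, T7, T8]

set_option maxHeartbeats 2000000 in
lemma E0_scalar (L q r a F0 nv0 ng0 nw0 D2 p0 pv0 c0 : ℝ)
    (hL : 0 < L) (ha : 0 < a)
    (hqe : q = 4*a*L) (hre : r = 4*a^2*L) (hr4 : r ≤ 1/4) (hq2L : q^2 ≤ L)
    (hF0 : 0 ≤ F0) (hD2 : 0 ≤ D2) (hng0 : 0 ≤ ng0) (hp0 : 0 ≤ p0)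
    (hngL : ng0 ≤ L^2*D2)
    (hF0p : F0 ≤ p0)
    (hp0cs : p0^2 ≤ ng0 * D2)
    (hc0 : 0 ≤ c0) (hc0' : c0 ≤ 2*a)
    (hnv0 : nv0 = c0^2*ng0) (hpv0 : pv0 = -(c0*p0))
    (hnw0 : nw0 = (1+2*r)^2*nv0 + 2*((1+2*r)*(2*q))*pv0 + (2*q)^2*D2) :
    (1+r)*F0 + nv0/4 + nw0/4 ≤ 3*L*D2 := by
  have hr0 : 0 < r := by rw [hre]; positivity
  have hq0 : 0 < q := by rw [hqe]; positivity
  have hp0L : p0 ≤ L*D2 := by nlinarith [mul_nonneg hL.le hD2]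
  have ha2 : a^2*ng0 ≤ (q^2/16)*D2 := by
    have e : a^2*L^2 = q^2/16 := by rw [hqe]; ring
    nlinarith
  have P1 : 0 ≤ (1+r)*(p0 - F0) := mul_nonneg (by linarith) (by linarith)
  have P2 : 0 ≤ (1/4 - r)*p0 := mul_nonneg (by linarith) hp0
  have P4 : 0 ≤ ((1 + (1+2*r)^2)/4) * (4*a^2*ng0 - c0^2*ng0) := by
    refine mul_nonneg (by positivity) ?_
    nlinarith [mul_nonneg (mul_nonneg (sub_nonneg.mpr hc0') (by linarith : (0:ℝ) ≤ 2*a + c0)) hng0]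
  have P5 : 0 ≤ (1 + (1+2*r)^2) * ((q^2/16)*D2 - a^2*ng0) :=
    mul_nonneg (by positivity) (by linarith)
  have P6 : 0 ≤ 2*((1+2*r)*(2*q))*(c0*p0) := by positivity
  have P7 : 0 ≤ (13/4 - (1 + (1+2*r)^2)) * ((q^2/16)*D2) := by
    refine mul_nonneg ?_ (by positivity)
    nlinarith
  have P8 : 0 ≤ (L - q^2)*D2 := mul_nonneg (by linarith) hD2
  have P9 : 0 ≤ L*D2 := mul_nonneg hL.le hD2
  subst hnv0 hpv0 hnw0
  linarith [P1, P2, P4, P5, P6, P7, P8, P9, hp0L]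



section Helpers

variable {E : Type*} [NormedAddCommGroup E] [InnerProductSpace ℝ E]

lemma norm_sq_expand (c b : ℝ) (u w : E) :
    ‖c•u + b•w‖^2 = c^2*‖u‖^2 + 2*(c*b)*⟪u,w⟫ + b^2*‖w‖^2 := by
  rw [norm_add_sq_real, norm_smul, norm_smul, real_inner_smul_left, real_inner_smul_right]
  simp only [Real.norm_eq_abs, mul_pow, sq_abs]
  ring

lemma inner_sq_le (u w : E) : ⟪u,w⟫^2 ≤ ‖u‖^2 * ‖w‖^2 := by
  have h := abs_real_inner_le_norm u w
  nlinarith [abs_nonneg ⟪u,w⟫, sq_abs ⟪u,w⟫, norm_nonneg u, norm_nonneg w]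

end Helpers



set_option maxHeartbeats 4000000 in
theorem stmt3
    {n : ℕ} (μ L : ℝ) (hμ : 0 < μ) (hμL : μ ≤ L)
    (f : EuclideanSpace ℝ (Fin n) → ℝ)
    (f' : EuclideanSpace ℝ (Fin n) → EuclideanSpace ℝ (Fin n))
    (hgrad : ∀ z, HasGradientAt f (f' z) z)
    (hLip : ∀ z w, ‖f' z - f' w‖ ≤ L * ‖z - w‖)
    (hsc : ∀ z w, f w ≥ f z + ⟪f' z, w - z⟫ + μ / 2 * ‖w - z‖ ^ 2)
    (xstar : EuclideanSpace ℝ (Fin n)) (hmin : ∀ z, f xstar ≤ f z)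
    (s : ℝ) (hs : s = μ / (16 * L ^ 2))
    (x v : ℕ → EuclideanSpace ℝ (Fin n))
    (hv0 : v 0 = -((2 * Real.sqrt s / (1 + Real.sqrt (μ * s))) • f' (x 0)))
    (hx : ∀ k : ℕ, x (k + 1) - x k = Real.sqrt s • v k)
    (hv : ∀ k : ℕ, v (k + 1) - v k = -((2 * Real.sqrt (μ * s)) • v (k + 1))
      - (Real.sqrt s * (1 + Real.sqrt (μ * s))) • f' (x (k + 1)))
    : ∀ k : ℕ, f (x k) - f xstar ≤ 3 * L * ‖x 0 - xstar‖ ^ 2 / (1 + μ / (16 * L)) ^ k := by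
  have hL : 0 < L := lt_of_lt_of_le hμ hμL
  set q : ℝ := Real.sqrt μ with hq_def
  set a : ℝ := Real.sqrt s with ha_def
  set r : ℝ := Real.sqrt (μ * s) with hr_def
  have hq2 : q^2 = μ := Real.sq_sqrt hμ.le
  have hs0 : 0 < s := by rw [hs]; positivity
  have ha_eq : a = q/(4*L) := by
    rw [ha_def, hs, show μ/(16*L^2) = (q/(4*L))^2 by rw [div_pow, hq2]; ring_nf]
    exact Real.sqrt_sq (by positivity)
  have ha : 0 < a := by rw [ha_def]; exact Real.sqrt_pos.mpr hs0
  have hqe : q = 4*a*L := by rw [ha_eq]; field_simp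
  have hrr : r = μ/(4*L) := by
    rw [hr_def, hs, show μ*(μ/(16*L^2)) = (μ/(4*L))^2 by field_simp; ring]
    exact Real.sqrt_sq (by positivity)
  have ha2s : a^2 = s := Real.sq_sqrt hs0.le
  have hre : r = 4*a^2*L := by rw [hrr, ha2s, hs]; field_simp; ring
  have hr0 : 0 < r := by rw [hre]; positivity
  have hr4 : r ≤ 1/4 := by
    rw [hrr, div_le_div_iff₀ (by positivity) (by norm_num)]; linarith
  have hq2L : q^2 ≤ L := by rw [hq2]; exact hμL
  have hra : r^2 = μ * a^2 := by rw [hre, ← hq2, hqe]; ring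
  have hq0 : 0 < q := Real.sqrt_pos.mpr hμ
  -- gradient at minimizer is zero
  have hstar : f' xstar = 0 := by
    have h := pl_lemma L hL f f' hgrad hLip xstar hmin xstar
    have : ‖f' xstar‖^2 ≤ 0 := by linarith
    have h2 : ‖f' xstar‖ = 0 := by nlinarith [norm_nonneg (f' xstar)]
    exact norm_eq_zero.mp h2
  have hpl := pl_lemma L hL f f' hgrad hLip xstar hmin
  have hfmin : ∀ z, 0 ≤ f z - f xstar := fun z => by linarith [hmin z]
  -- Lyapunov function
  set W : ℕ → EuclideanSpace ℝ (Fin n) := fun k => v k + (2*q) • (x (k+1) - xstar) with hW_def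
  set En : ℕ → ℝ := fun k => (1+r)*(f (x k) - f xstar) + ‖v k‖^2/4 + ‖W k‖^2/4 with hEn_def
  have hEn_lb : ∀ k, f (x k) - f xstar ≤ En k := by
    intro k
    have h1 := hfmin (x k)
    have h2 : 0 ≤ ‖v k‖^2 := sq_nonneg _
    have h3 : 0 ≤ ‖W k‖^2 := sq_nonneg _
    have : (1:ℝ) ≤ 1 + r := by linarith
    simp only [hEn_def]
    nlinarith [mul_nonneg (le_of_lt hr0) h1]
  -- one-step contraction
  have key : ∀ k, (1+r/4) * En (k+1) ≤ En k := by
    intro k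
    set V' := v (k+1) with hV'_def
    set G := f' (x (k+1)) with hG_def
    set X' := x (k+1) - xstar with hX'_def
    have hV : v k = (1+2*r) • V' + (a*(1+r)) • G := by
      have h := hv k
      have h2 : v k = v (k+1) - (v (k+1) - v k) := by abel
      rw [h2, h]; module
    have hW1 : W (k+1) = (1+2*r) • V' + (2*q) • X' := by
      have h := hx (k+1)
      have h2 : x (k+1+1) - xstar = X' + a • V' := by
        rw [hX'_def, hV'_def, ← h]; abel
      have hqa : 2*q*a = 2*r := by rw [hqe, hre]; ring
      show v (k+1) + (2*q) • (x (k+1+1) - xstar) = _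
      rw [h2, smul_add, smul_smul, hqa]
      module
    have hWk : W k = W (k+1) + (a*(1+r)) • G := by
      show v k + (2*q) • (x (k+1) - xstar) = _
      rw [hV, hW1]; module
    have hnv : ‖v k‖^2 = (1+2*r)^2*‖V'‖^2 + 2*((1+2*r)*(a*(1+r)))*⟪G,V'⟫ + (a*(1+r))^2*‖G‖^2 := by
      rw [hV, norm_sq_expand, real_inner_comm V' G]
    have hnwp : ‖W (k+1)‖^2
        = (1+2*r)^2*‖V'‖^2 + 2*((1+2*r)*(2*q))*⟪V',X'⟫ + (2*q)^2*‖X'‖^2 := by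
      rw [hW1, norm_sq_expand]
    have hWG : ⟪W (k+1), G⟫ = (1+2*r)*⟪G,V'⟫ + 2*q*⟪G,X'⟫ := by
      rw [hW1, inner_add_left, real_inner_smul_left, real_inner_smul_left,
        real_inner_comm V' G, real_inner_comm X' G]
    have hnw : ‖W k‖^2 = ‖W (k+1)‖^2 + 2*(a*(1+r))*((1+2*r)*⟪G,V'⟫ + 2*q*⟪G,X'⟫)
        + (a*(1+r))^2*‖G‖^2 := by
      calc ‖W k‖^2 = ‖(1:ℝ) • W (k+1) + (a*(1+r)) • G‖^2 := by rw [one_smul, hWk]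
        _ = 1^2*‖W (k+1)‖^2 + 2*(1*(a*(1+r)))*⟪W (k+1), G⟫ + (a*(1+r))^2*‖G‖^2 :=
            norm_sq_expand 1 (a*(1+r)) (W (k+1)) G
        _ = _ := by rw [hWG]; ring
    have hGv : ⟪G, v k⟫ = (1+2*r)*⟪G,V'⟫ + (a*(1+r))*‖G‖^2 := by
      rw [hV, inner_add_right, real_inner_smul_right, real_inner_smul_right,
        real_inner_self_eq_norm_sq]
    have hi : f (x k) - f xstar ≥ (f (x (k+1)) - f xstar)
        - a*((1+2*r)*⟪G,V'⟫ + (a*(1+r))*‖G‖^2) + r^2/2*‖v k‖^2 := by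
      have h := hsc (x (k+1)) (x k)
      have hd : x k - x (k+1) = -(a • v k) := by rw [← hx k]; abel
      rw [hd] at h
      have h2 : ⟪G, -(a • v k)⟫ = -(a * ⟪G, v k⟫) := by
        rw [inner_neg_right, real_inner_smul_right]
      have h3 : ‖-(a • v k)‖^2 = a^2 * ‖v k‖^2 := by
        rw [norm_neg, norm_smul, Real.norm_eq_abs, mul_pow, sq_abs]
      rw [h2, h3, hGv] at h
      have h4 : μ/2 * (a^2*‖v k‖^2) = r^2/2*‖v k‖^2 := by rw [hra]; ring
      nlinarith [h]
    have hii : ⟪G,X'⟫ ≥ (f (x (k+1)) - f xstar) + q^2/2*‖X'‖^2 := by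
      have h := hsc (x (k+1)) xstar
      have hd : xstar - x (k+1) = -X' := by rw [hX'_def]; abel
      rw [hd, inner_neg_right, norm_neg, ← hG_def] at h
      rw [hq2]
      linarith [h]
    have hiii : ‖G‖^2 ≤ 4*L*(f (x (k+1)) - f xstar) := hpl (x (k+1))
    have hcs : ⟪V',X'⟫^2 ≤ ‖V'‖^2 * ‖X'‖^2 := inner_sq_le V' X'
    exact step_scalar L q r a (f (x (k+1)) - f xstar) (f (x k) - f xstar)
      (‖v k‖^2) (‖V'‖^2) (‖G‖^2) (‖X'‖^2) (‖W k‖^2) (‖W (k+1)‖^2)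
      (⟪G,V'⟫) (⟪G,X'⟫) (⟪V',X'⟫) (En k) (En (k+1))
      hL ha hqe hre hr4
      (hfmin (x (k+1))) (sq_nonneg _) (sq_nonneg _) (sq_nonneg _) (sq_nonneg _)
      hnv hnwp hnw rfl rfl hi hii hiii hcs
  -- initial energy bound
  have hE0 : En 0 ≤ 3*L*‖x 0 - xstar‖^2 := by
    set G0 := f' (x 0) with hG0_def
    set X0 := x 0 - xstar with hX0_def
    set c0 : ℝ := 2*a/(1+r) with hc0_def
    have hv0' : v 0 = -(c0 • G0) := hv0
    have hc0 : 0 ≤ c0 := by positivity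
    have hc0' : c0 ≤ 2*a := by
      rw [hc0_def, div_le_iff₀ (by linarith)]
      nlinarith
    have hnv0 : ‖v 0‖^2 = c0^2*‖G0‖^2 := by
      rw [hv0', norm_neg, norm_smul, Real.norm_eq_abs, mul_pow, sq_abs]
    have hpv0 : ⟪v 0, X0⟫ = -(c0*⟪G0,X0⟫) := by
      rw [hv0', inner_neg_left, real_inner_smul_left]
    have hnw0 : ‖W 0‖^2 = (1+2*r)^2*‖v 0‖^2 + 2*((1+2*r)*(2*q))*⟪v 0,X0⟫ + (2*q)^2*‖X0‖^2 := by
      have h := hx 0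
      have h2 : x 1 - xstar = X0 + a • v 0 := by rw [hX0_def, ← h]; abel
      have hqa : 2*q*a = 2*r := by rw [hqe, hre]; ring
      have hW0 : W 0 = (1+2*r) • v 0 + (2*q) • X0 := by
        show v 0 + (2*q) • (x 1 - xstar) = _
        rw [h2, smul_add, smul_smul, hqa]; module
      rw [hW0, norm_sq_expand]
    have hngL : ‖G0‖^2 ≤ L^2*‖X0‖^2 := by
      have h := hLip (x 0) xstar
      rw [hstar, sub_zero] at h
      nlinarith [norm_nonneg G0, norm_nonneg X0, mul_nonneg hL.le (norm_nonneg X0)]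
    have hscc := hsc (x 0) xstar
    have hd : xstar - x 0 = -X0 := by rw [hX0_def]; abel
    rw [hd, inner_neg_right] at hscc
    have hF0p : f (x 0) - f xstar ≤ ⟪G0,X0⟫ := by
      nlinarith [sq_nonneg ‖X0‖, hscc]
    have hp0 : 0 ≤ ⟪G0,X0⟫ := by
      nlinarith [hfmin (x 0), sq_nonneg ‖X0‖, hscc]
    have hp0cs : ⟪G0,X0⟫^2 ≤ ‖G0‖^2 * ‖X0‖^2 := inner_sq_le G0 X0
    exact E0_scalar L q r a (f (x 0) - f xstar) (‖v 0‖^2) (‖G0‖^2) (‖W 0‖^2)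
      (‖X0‖^2) (⟪G0,X0⟫) (⟪v 0,X0⟫) c0
      hL ha hqe hre hr4 hq2L (hfmin (x 0)) (sq_nonneg _) (sq_nonneg _) hp0
      hngL hF0p hp0cs hc0 hc0' hnv0 hpv0 hnw0
  -- iterate
  have h14 : (0:ℝ) < 1 + r/4 := by linarith
  have hiter : ∀ k, En k ≤ En 0 / (1+r/4)^k := by
    intro k
    induction k with
    | zero => simp
    | succ k ih =>
      have hk := key k
      have h1 : En (k+1) ≤ En k / (1+r/4) := by
        rw [le_div_iff₀ h14]; linarith
      calc En (k+1) ≤ En k / (1+r/4) := h1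
        _ ≤ (En 0 / (1+r/4)^k) / (1+r/4) := by gcongr
        _ = En 0 / (1+r/4)^(k+1) := by rw [div_div, ← pow_succ]
  intro k
  have h1 := hEn_lb k
  have h2 := hiter k
  have h3 : En 0 / (1+r/4)^k ≤ 3*L*‖x 0 - xstar‖^2 / (1+r/4)^k := by gcongr
  have h4 : 1 + r/4 = 1 + μ/(16*L) := by rw [hrr]; ring
  rw [h4] at h3 h2
  exact le_trans h1 (le_trans h2 h3)
end

section
/- Let 0 < μ ≤ L, let f be μ-strongly convex with L-Lipschitz gradient on ℝⁿ, with minimizer x⋆, and take step size s = μ/(36L²). Then the iterates of the explicit Euler scheme for the high-resolution heavy-ball ODE satisfy, for every k ≥ 0, f(x_k) − f(x⋆) ≤ 3L‖x₀ − x⋆‖² (1 − μ/(48L))^k. -/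
open scoped RealInnerProductSpace

set_option maxHeartbeats 2000000

section Aux
variable {E : Type*} [NormedAddCommGroup E] [InnerProductSpace ℝ E]

private lemma amgm' (x A B : ℝ) (hA : 0 ≤ A) (hB : 0 ≤ B) (hx : x^2 ≤ 4*A*B) : x ≤ A + B := by
  nlinarith [sq_nonneg (A - B), sq_nonneg (A + B - x), sq_nonneg (A + B + x)]

private lemma expand2 (α β : ℝ) (u z : E) :
    ‖α•u + β•z‖^2 = α^2*‖u‖^2 + (2*α*β)*⟪u,z⟫ + β^2*‖z‖^2 := by
  rw [← real_inner_self_eq_norm_sq, ← real_inner_self_eq_norm_sq, ← real_inner_self_eq_norm_sq]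
  simp only [inner_add_left, inner_add_right, real_inner_smul_left, real_inner_smul_right,
    real_inner_comm u z]
  ring

private lemma expand3 (α β γ : ℝ) (u z y : E) :
    ‖α•u + β•z + γ•y‖^2 = α^2*‖u‖^2 + β^2*‖z‖^2 + γ^2*‖y‖^2
      + (2*α*β)*⟪u,z⟫ + (2*α*γ)*⟪u,y⟫ + (2*β*γ)*⟪z,y⟫ := by
  rw [← real_inner_self_eq_norm_sq, ← real_inner_self_eq_norm_sq, ← real_inner_self_eq_norm_sq,
    ← real_inner_self_eq_norm_sq]
  simp only [inner_add_left, inner_add_right, real_inner_smul_left, real_inner_smul_right,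
    real_inner_comm u z, real_inner_comm u y, real_inner_comm z y]
  ring

private lemma core' (a L V W H t F q' p' : ℝ)
    (hL : 0 < L) (ha : 0 < a) (ha6 : a ≤ 1/6)
    (hV : 0 ≤ V) (hW : 0 ≤ W) (hH : 0 ≤ H)
    (hq : q'^2 ≤ H*V) (hp : 6*L*p'^2 ≤ a*V*W)
    (ht : 6*a*L*W ≤ t)
    (hH4 : H ≤ (2*a/3)*t - 2*a^2*L*W)
    (hF1 : F ≤ t - 3*a*L*W) :
    a*(1+a)*q' + a*(7*a-5)/6*V + (1/2)*(1+a)^2*H - a*(1+a)*t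
      + a/8*(1+a)*F + a/16*V + 3/4*a^2*L*W + 3/4*a*L*p' ≤ 0 := by
  have hA1 : a*(1+a)*q' ≤ (3/10)*(1+a)*H + (5/6)*a^2*(1+a)*V := by
    apply amgm'
    · positivity
    · positivity
    · nlinarith [mul_le_mul_of_nonneg_left hq (show (0:ℝ) ≤ a^2*(1+a)^2 by positivity)]
  have hA2 : 3/4*a*L*p' ≤ 3/16*a*V + 1/8*a^2*L*W := by
    apply amgm'
    · positivity
    · positivity
    · nlinarith [mul_le_mul_of_nonneg_left hp (show (0:ℝ) ≤ 3/32*a^2*L by positivity)]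
  have hA3 : a/8*(1+a)*F ≤ a/8*(1+a)*(t - 3*a*L*W) :=
    mul_le_mul_of_nonneg_left hF1 (by positivity)
  have hA4 : ((1+a)^2/2 + 3/10*(1+a))*H ≤ ((1+a)^2/2 + 3/10*(1+a))*((2*a/3)*t - 2*a^2*L*W) :=
    mul_le_mul_of_nonneg_left hH4 (by positivity)
  have hm2 : (0:ℝ) ≤ 7/8*a*(1+a) - (2*a/3)*((1+a)^2/2 + 3/10*(1+a)) := by
    nlinarith [sq_nonneg a, ha.le, ha6]
  have hA5 : (7/8*a*(1+a) - (2*a/3)*((1+a)^2/2 + 3/10*(1+a))) * (6*a*L*W)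
      ≤ (7/8*a*(1+a) - (2*a/3)*((1+a)^2/2 + 3/10*(1+a))) * t :=
    mul_le_mul_of_nonneg_left ht hm2
  have hcV : a*((7*a-5)/6 + 5*a/6*(1+a) + 1/4) * V ≤ 0 := by
    have h1 : a*((7*a-5)/6 + 5*a/6*(1+a) + 1/4) ≤ 0 := by nlinarith [sq_nonneg a, ha.le, ha6]
    exact mul_nonpos_of_nonpos_of_nonneg h1 hV
  have hcW : a^2*L*(7/8 - 45/8*(1+a) + 3/5*(1+a) + (1+a)^2) * W ≤ 0 := by
    have h1 : (7/8 - 45/8*(1+a) + 3/5*(1+a) + (1+a)^2) ≤ 0 := by nlinarith [sq_nonneg a, ha.le, ha6]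
    have h2 : (0:ℝ) ≤ a^2*L := by positivity
    exact mul_nonpos_of_nonpos_of_nonneg (mul_nonpos_of_nonneg_of_nonpos h2 h1) hW
  linarith [hA1, hA2, hA3, hA4, hA5, hcV, hcW]

end Aux

theorem stmt4
    {n : ℕ} (μ L : ℝ) (hμ : 0 < μ) (hμL : μ ≤ L)
    (f : EuclideanSpace ℝ (Fin n) → ℝ)
    (f' : EuclideanSpace ℝ (Fin n) → EuclideanSpace ℝ (Fin n))
    (hgrad : ∀ z, HasGradientAt f (f' z) z)
    (hLip : ∀ z w, ‖f' z - f' w‖ ≤ L * ‖z - w‖)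
    (hsc : ∀ z w, f w ≥ f z + ⟪f' z, w - z⟫ + μ / 2 * ‖w - z‖ ^ 2)
    (xstar : EuclideanSpace ℝ (Fin n)) (hmin : ∀ z, f xstar ≤ f z)
    (s : ℝ) (hs : s = μ / (36 * L ^ 2))
    (x v : ℕ → EuclideanSpace ℝ (Fin n))
    (hv0 : v 0 = -((2 * Real.sqrt s / (1 + Real.sqrt (μ * s))) • f' (x 0)))
    (hx : ∀ k : ℕ, x (k + 1) - x k = Real.sqrt s • v k)
    (hv : ∀ k : ℕ, v (k + 1) - v k = -((2 * Real.sqrt (μ * s)) • v k)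
      - (Real.sqrt s * (1 + Real.sqrt (μ * s))) • f' (x k))
    : ∀ k : ℕ, f (x k) - f xstar ≤ 3 * L * ‖x 0 - xstar‖ ^ 2 * (1 - μ / (48 * L)) ^ k := by
  have hL : 0 < L := lt_of_lt_of_le hμ hμL
  set a : ℝ := μ / (6 * L) with ha_def
  have ha : 0 < a := by positivity
  have ha6 : a ≤ 1/6 := by
    rw [ha_def, div_le_iff₀ (by positivity : (0:ℝ) < 6*L)]; linarith
  have hmu : μ = 6*a*L := by rw [ha_def]; field_simp
  have hs0 : 0 < s := by rw [hs]; positivity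
  set r : ℝ := Real.sqrt s with hr_def
  have hrpos : 0 < r := Real.sqrt_pos.mpr hs0
  have hr2 : r^2 = s := Real.sq_sqrt hs0.le
  have hLr2 : L * r^2 = a/6 := by
    rw [hr2, hs, ha_def]; field_simp; ring
  have hsqms : Real.sqrt (μ * s) = a := by
    have h1 : μ * s = a^2 := by rw [hs, ha_def]; field_simp; ring
    rw [h1, Real.sqrt_sq ha.le]
  -- descent lemma with constant L
  have descent : ∀ z y, f y ≤ f z + ⟪f' z, y - z⟫ + L * ‖y - z‖^2 := by
    intro z y
    have h1 := hsc y z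
    have h2 : ⟪f' y - f' z, y - z⟫ ≤ L*‖y-z‖^2 := by
      calc ⟪f' y - f' z, y - z⟫ ≤ ‖f' y - f' z‖*‖y-z‖ := real_inner_le_norm _ _
        _ ≤ (L*‖y-z‖)*‖y-z‖ := mul_le_mul_of_nonneg_right (hLip y z) (norm_nonneg _)
        _ = L*‖y-z‖^2 := by ring
    have h3 : ⟪f' y, z - y⟫ = -(⟪f' z, y-z⟫ + ⟪f' y - f' z, y - z⟫) := by
      have e1 : z - y = -(y - z) := by abel
      rw [e1, inner_neg_right, inner_sub_left]; ring
    have h4 : ‖z - y‖ = ‖y - z‖ := norm_sub_rev _ _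
    have h5 : 0 ≤ μ / 2 * ‖y - z‖ ^ 2 := by positivity
    rw [h3, h4] at h1
    linarith
  -- gradient lower bound : ‖f' z‖² ≤ 4 L (f z - f xstar)
  have gradlb : ∀ z, ‖f' z‖^2 ≤ 4*L*(f z - f xstar) := by
    intro z
    have h1 := descent z (z - (1/(2*L)) • f' z)
    have e1 : z - (1/(2*L)) • f' z - z = -((1/(2*L)) • f' z) := by abel
    have e2 : ⟪f' z, -((1/(2*L)) • f' z)⟫ = -(1/(2*L)) * ‖f' z‖^2 := by
      rw [inner_neg_right, real_inner_smul_right, real_inner_self_eq_norm_sq]; ring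
    have e3 : ‖-((1/(2*L)) • f' z)‖^2 = (1/(2*L))^2 * ‖f' z‖^2 := by
      rw [norm_neg, norm_smul, Real.norm_eq_abs, abs_of_pos (by positivity : (0:ℝ) < 1/(2*L))]
      ring
    rw [e1, e2, e3] at h1
    have h6 := hmin (z - (1/(2*L)) • f' z)
    have e4 : -(1/(2*L)) * ‖f' z‖^2 + L * ((1/(2*L))^2 * ‖f' z‖^2) = -(1/(4*L)) * ‖f' z‖^2 := by
      field_simp; ring
    have h7 : f xstar ≤ f z - 1/(4*L) * ‖f' z‖^2 := by nlinarith [h1, h6]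
    have h8 := mul_le_mul_of_nonneg_left h7 (show (0:ℝ) ≤ 4*L by positivity)
    have e5 : 4*L*(f z - 1/(4*L) * ‖f' z‖^2) = 4*L*(f z) - ‖f' z‖^2 := by
      field_simp
    nlinarith [h8, e5.le, e5.ge]
  -- gradient at xstar is zero
  have gstar : f' xstar = 0 := by
    have h := gradlb xstar
    have h2 : ‖f' xstar‖^2 ≤ 0 := by nlinarith [h]
    have h0 : ‖f' xstar‖ = 0 := by nlinarith [norm_nonneg (f' xstar), h2]
    exact norm_eq_zero.mp h0
  have hFlb : ∀ k, 3*a*L*‖x k - xstar‖^2 ≤ f (x k) - f xstar := by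
    intro k
    have h := hsc xstar (x k)
    rw [gstar, inner_zero_left] at h
    have e : μ/2 * ‖x k - xstar‖^2 = 3*a*L*‖x k - xstar‖^2 := by rw [hmu]; ring
    linarith [e.le, e.ge]
  have hFub : ∀ k, f (x k) - f xstar ≤ ⟪f' (x k), x k - xstar⟫ - 3*a*L*‖x k - xstar‖^2 := by
    intro k
    have h := hsc (x k) xstar
    have e1 : xstar - x k = -(x k - xstar) := by abel
    rw [e1, inner_neg_right, norm_neg] at h
    have e : μ/2 * ‖x k - xstar‖^2 = 3*a*L*‖x k - xstar‖^2 := by rw [hmu]; ring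
    linarith [e.le, e.ge]
  set En : ℕ → ℝ := fun k => (1+a)*(f (x k) - f xstar) + (1/4)*‖v k‖^2
      + (1/4)*‖v k + (12*L*r) • (x k - xstar)‖^2 with hEn_def
  have hrate : (0:ℝ) ≤ 1 - a/8 := by linarith
  -- one-step decay
  have hstep : ∀ k, En (k+1) ≤ (1 - a/8) * En k := by
    intro k
    have hVnn : (0:ℝ) ≤ ‖v k‖^2 := sq_nonneg _
    have hWnn : (0:ℝ) ≤ ‖x k - xstar‖^2 := sq_nonneg _
    have hGnn : (0:ℝ) ≤ ‖f' (x k)‖^2 := sq_nonneg _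
    have hxk1 : x (k+1) = x k + r • v k := by
      have h := sub_eq_iff_eq_add.mp (hx k)
      rw [h]; abel
    have hvk1 : v (k+1) = (1-2*a) • v k + (-(r*(1+a))) • f' (x k) := by
      have h := hv k
      rw [hsqms] at h
      have h2 := sub_eq_iff_eq_add.mp h
      rw [h2]; module
    have h12 : (12*L*r)*r = 2*a := by linear_combination 12*hLr2
    have eA : ‖v (k+1)‖^2 = (1-2*a)^2*‖v k‖^2
        - 2*(1-2*a)*(1+a)*(r*⟪v k, f' (x k)⟫) + (1+a)^2*(r^2*‖f' (x k)‖^2) := by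
      rw [hvk1, expand2]; ring
    have eB : v (k+1) + (12*L*r) • (x (k+1) - xstar)
        = (1:ℝ) • v k + (-(r*(1+a))) • f' (x k) + (12*L*r) • (x k - xstar) := by
      rw [hvk1, hxk1]
      have e : x k + r • v k - xstar = (x k - xstar) + r • v k := by abel
      rw [e, smul_add, show (12*L*r) • (r • v k) = ((12*L*r)*r) • v k from (smul_smul _ _ _), h12]
      module
    have eB2 : ‖v (k+1) + (12*L*r) • (x (k+1) - xstar)‖^2
        = ‖v k‖^2 + (1+a)^2*(r^2*‖f' (x k)‖^2) + 24*a*L*‖x k - xstar‖^2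
          - 2*(1+a)*(r*⟪v k, f' (x k)⟫) + 24*L*(r*⟪v k, x k - xstar⟫)
          - 4*a*(1+a)*⟪f' (x k), x k - xstar⟫ := by
      rw [eB, expand3]
      linear_combination (144*L*‖x k - xstar‖^2 - 24*(1+a)*⟪f' (x k), x k - xstar⟫)*hLr2
    have eC : ‖v k + (12*L*r) • (x k - xstar)‖^2
        = ‖v k‖^2 + 24*a*L*‖x k - xstar‖^2 + 24*L*(r*⟪v k, x k - xstar⟫) := by
      have e0 : v k + (12*L*r) • (x k - xstar) = (1:ℝ) • v k + (12*L*r) • (x k - xstar) := by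
        module
      rw [e0, expand2]
      linear_combination (144*L*‖x k - xstar‖^2)*hLr2
    -- scalar hypotheses for core'
    have hq' : (r*⟪v k, f' (x k)⟫)^2 ≤ (r^2*‖f' (x k)‖^2)*‖v k‖^2 := by
      have h := real_inner_mul_inner_self_le (v k) (f' (x k))
      rw [real_inner_self_eq_norm_sq, real_inner_self_eq_norm_sq] at h
      nlinarith [mul_le_mul_of_nonneg_left h (sq_nonneg r)]
    have hp' : 6*L*(r*⟪v k, x k - xstar⟫)^2 ≤ a*‖v k‖^2*‖x k - xstar‖^2 := by
      have h := real_inner_mul_inner_self_le (v k) (x k - xstar)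
      rw [real_inner_self_eq_norm_sq, real_inner_self_eq_norm_sq] at h
      have h2 : 6*L*(r*⟪v k, x k - xstar⟫)^2
          = a*(⟪v k, x k - xstar⟫*⟪v k, x k - xstar⟫) := by
        linear_combination 6*(⟪v k, x k - xstar⟫*⟪v k, x k - xstar⟫)*hLr2
      nlinarith [mul_le_mul_of_nonneg_left h ha.le]
    have hF1 : f (x k) - f xstar ≤ ⟪f' (x k), x k - xstar⟫ - 3*a*L*‖x k - xstar‖^2 := hFub k
    have hF0 : 3*a*L*‖x k - xstar‖^2 ≤ f (x k) - f xstar := hFlb k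
    have ht6 : 6*a*L*‖x k - xstar‖^2 ≤ ⟪f' (x k), x k - xstar⟫ := by linarith
    have hH4 : r^2*‖f' (x k)‖^2
        ≤ (2*a/3)*⟪f' (x k), x k - xstar⟫ - 2*a^2*L*‖x k - xstar‖^2 := by
      have h1 : ‖f' (x k)‖^2
          ≤ 4*L*(⟪f' (x k), x k - xstar⟫ - 3*a*L*‖x k - xstar‖^2) := by
        have h2 := gradlb (x k)
        nlinarith [mul_le_mul_of_nonneg_left hF1 (show (0:ℝ) ≤ 4*L by positivity)]
      have h3 := mul_le_mul_of_nonneg_left h1 (sq_nonneg r)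
      have e4 : r^2*(4*L*(⟪f' (x k), x k - xstar⟫ - 3*a*L*‖x k - xstar‖^2))
          = (2*a/3)*⟪f' (x k), x k - xstar⟫ - 2*a^2*L*‖x k - xstar‖^2 := by
        linear_combination (4*⟪f' (x k), x k - xstar⟫ - 12*a*L*‖x k - xstar‖^2)*hLr2
      linarith [h3, e4.le, e4.ge]
    have hT := core' a L (‖v k‖^2) (‖x k - xstar‖^2) (r^2*‖f' (x k)‖^2)
      (⟪f' (x k), x k - xstar⟫) (f (x k) - f xstar) (r*⟪v k, f' (x k)⟫)
      (r*⟪v k, x k - xstar⟫) hL ha ha6 hVnn hWnn (by positivity) hq' hp' ht6 hH4 hF1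
    -- descent step
    have hdesc : f (x (k+1)) ≤ f (x k) + r*⟪v k, f' (x k)⟫ + (a/6)*‖v k‖^2 := by
      have h := descent (x k) (x (k+1))
      have e1 : x (k+1) - x k = r • v k := by rw [hxk1]; abel
      rw [e1] at h
      have e2 : ⟪f' (x k), r • v k⟫ = r*⟪v k, f' (x k)⟫ := by
        rw [real_inner_smul_right, real_inner_comm]
      have e3 : ‖r • v k‖^2 = r^2*‖v k‖^2 := by
        rw [norm_smul, Real.norm_eq_abs, abs_of_pos hrpos]; ring
      rw [e2, e3] at h
      have e4 : L*(r^2*‖v k‖^2) = (a/6)*‖v k‖^2 := by linear_combination ‖v k‖^2*hLr2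
      linarith [e4.le, e4.ge]
    have hdesc' : (1+a)*(f (x (k+1)) - f xstar)
        ≤ (1+a)*((f (x k) - f xstar) + r*⟪v k, f' (x k)⟫ + (a/6)*‖v k‖^2) :=
      mul_le_mul_of_nonneg_left (by linarith) (by linarith)
    show (1+a)*(f (x (k+1)) - f xstar) + (1/4)*‖v (k+1)‖^2
        + (1/4)*‖v (k+1) + (12*L*r) • (x (k+1) - xstar)‖^2
      ≤ (1 - a/8) * ((1+a)*(f (x k) - f xstar) + (1/4)*‖v k‖^2
        + (1/4)*‖v k + (12*L*r) • (x k - xstar)‖^2)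
    rw [eA, eB2, eC]
    linarith only [hT, hdesc']
  -- geometric decay
  have hgeo : ∀ k, En k ≤ (1 - a/8)^k * En 0 := by
    intro k
    induction k with
    | zero => simp
    | succ k ih =>
      calc En (k+1) ≤ (1 - a/8) * En k := hstep k
        _ ≤ (1 - a/8) * ((1 - a/8)^k * En 0) := mul_le_mul_of_nonneg_left ih hrate
        _ = (1 - a/8)^(k+1) * En 0 := by ring
  -- initial bound
  have hE0 : En 0 ≤ (1+a) * (3*L*‖x 0 - xstar‖^2) := by
    have hWnn : (0:ℝ) ≤ ‖x 0 - xstar‖^2 := sq_nonneg _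
    have hGnn : (0:ℝ) ≤ ‖f' (x 0)‖^2 := sq_nonneg _
    have hv0' : v 0 = (-(2*r/(1+a))) • f' (x 0) := by
      rw [hv0, hsqms]; module
    have hF0ub : f (x 0) - f xstar ≤ L*‖x 0 - xstar‖^2 := by
      have h := descent xstar (x 0)
      rw [gstar, inner_zero_left] at h
      linarith
    have hGW : ‖f' (x 0)‖^2 ≤ L^2*‖x 0 - xstar‖^2 := by
      have h := hLip (x 0) xstar
      rw [gstar, sub_zero] at h
      nlinarith [mul_self_le_mul_self (norm_nonneg (f' (x 0))) h]
    have ht0 : 0 ≤ ⟪f' (x 0), x 0 - xstar⟫ := by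
      have h1 := hFlb 0
      have h2 := hFub 0
      nlinarith [mul_nonneg (mul_nonneg (mul_nonneg (by norm_num : (0:ℝ) ≤ 3) ha.le) hL.le) hWnn]
    have e1 : ‖v 0‖^2 = (2*r/(1+a))^2*‖f' (x 0)‖^2 := by
      rw [hv0', norm_smul, Real.norm_eq_abs, abs_of_neg (neg_lt_zero.mpr (by positivity : (0:ℝ) < 2*r/(1+a)))]
      ring
    have e2 : ‖v 0 + (12*L*r) • (x 0 - xstar)‖^2
        = (2*r/(1+a))^2*‖f' (x 0)‖^2
          - 2*(2*r/(1+a))*(12*L*r)*⟪f' (x 0), x 0 - xstar⟫ + 24*a*L*‖x 0 - xstar‖^2 := by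
      rw [hv0', expand2]
      linear_combination (144*L*‖x 0 - xstar‖^2)*hLr2
    have hr2G : r^2*‖f' (x 0)‖^2 ≤ (a/6)*L*‖x 0 - xstar‖^2 := by
      have h1 := mul_le_mul_of_nonneg_left hGW (sq_nonneg r)
      have e : r^2*(L^2*‖x 0 - xstar‖^2) = (a/6)*L*‖x 0 - xstar‖^2 := by
        linear_combination (L*‖x 0 - xstar‖^2)*hLr2
      linarith [h1, e.le, e.ge]
    have hfrac : (2*r/(1+a))^2 ≤ 4*r^2 := by
      rw [div_pow]
      have h1 : (1:ℝ) ≤ (1+a)^2 := by nlinarith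
      calc (2*r)^2/(1+a)^2 ≤ (2*r)^2/1 :=
            div_le_div_of_nonneg_left (by positivity) (by norm_num) h1
        _ = 4*r^2 := by ring
    have hcross : 0 ≤ 2*(2*r/(1+a))*(12*L*r)*⟪f' (x 0), x 0 - xstar⟫ :=
      mul_nonneg (by positivity) ht0
    have hbound : (2*r/(1+a))^2*‖f' (x 0)‖^2 ≤ 4*(r^2*‖f' (x 0)‖^2) := by
      nlinarith [hfrac, hGnn]
    have haLW : 19/3*a*(L*‖x 0 - xstar‖^2) ≤ (2+2*a)*(L*‖x 0 - xstar‖^2) :=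
      mul_le_mul_of_nonneg_right (by linarith) (mul_nonneg hL.le hWnn)
    have hF0ub' : (1+a)*(f (x 0) - f xstar) ≤ (1+a)*(L*‖x 0 - xstar‖^2) :=
      mul_le_mul_of_nonneg_left hF0ub (by linarith)
    show (1+a)*(f (x 0) - f xstar) + (1/4)*‖v 0‖^2
        + (1/4)*‖v 0 + (12*L*r) • (x 0 - xstar)‖^2 ≤ (1+a) * (3*L*‖x 0 - xstar‖^2)
    rw [e1, e2]
    linarith only [hF0ub', hr2G, hbound, hcross, haLW]
  -- conclusion
  intro k
  have hr8 : 1 - μ/(48*L) = 1 - a/8 := by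
    rw [ha_def]; field_simp; ring
  have hEk := hgeo k
  have hquad : (1+a)*(f (x k) - f xstar) ≤ En k := by
    have h1 : (0:ℝ) ≤ (1/4)*‖v k‖^2 := by positivity
    have h2 : (0:ℝ) ≤ (1/4)*‖v k + (12*L*r) • (x k - xstar)‖^2 := by positivity
    show (1+a)*(f (x k) - f xstar) ≤ (1+a)*(f (x k) - f xstar) + (1/4)*‖v k‖^2
      + (1/4)*‖v k + (12*L*r) • (x k - xstar)‖^2
    linarith
  have hE0' : (1 - a/8)^k * En 0 ≤ (1 - a/8)^k * ((1+a) * (3*L*‖x 0 - xstar‖^2)) :=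
    mul_le_mul_of_nonneg_left hE0 (pow_nonneg hrate k)
  have hfinal : (1+a)*(f (x k) - f xstar) ≤ (1+a) * ((1 - a/8)^k * (3*L*‖x 0 - xstar‖^2)) := by
    calc (1+a)*(f (x k) - f xstar) ≤ En k := hquad
      _ ≤ (1 - a/8)^k * En 0 := hEk
      _ ≤ (1 - a/8)^k * ((1+a) * (3*L*‖x 0 - xstar‖^2)) := hE0'
      _ = (1+a) * ((1 - a/8)^k * (3*L*‖x 0 - xstar‖^2)) := by ring
  have h1a : (0:ℝ) < 1+a := by linarith
  have hlast := (mul_le_mul_iff_right₀ h1a).mp hfinal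
  rw [hr8]
  linarith [hlast]
end
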